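/- Let z₁ = ρ, z₂ = ρ/p, z₃ = u for a pair of states (ρ_i, u_i, p_i), i ∈ {L,R}, with ρ_i, p_i > 0 and |u_i| < 1. Then the jump of the first entropy variable V₁ = (Γ-S)/(Γ-1) + ρ/p (with S = ln p - Γ ln ρ) satisfies [[V₁]] = [[z₁]]/⟨z₁⟩_ln + (1/(Γ-1))·[[z₂]]/⟨z₂⟩_ln + [[z₂]], where ⟨·⟩_ln denotes the logarithmic mean and [[·]] the jump. -/
import Mathlib


open Real

/-- The logarithmic mean (continuous extension on the diagonal). -/
noncomputable def logMean (aL aR : ℝ) : ℝ :=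
  if aL = aR then aL else (aR - aL) / (Real.log aR - Real.log aL)

lemma jump_div_logMean (aL aR : ℝ) (hL : 0 < aL) (hR : 0 < aR) (h : aL ≠ aR) :
    (aR - aL) / logMean aL aR = Real.log aR - Real.log aL := by
  have hlog : Real.log aR - Real.log aL ≠ 0 := by
    intro hc
    exact h (Real.log_injOn_pos (Set.mem_Ioi.mpr hL) (Set.mem_Ioi.mpr hR)
      (by linarith [sub_eq_zero.mp hc]))
  have hsub : aR - aL ≠ 0 := sub_ne_zero.mpr (Ne.symm h)
  rw [logMean, if_neg h]; field_simp

/-- Jump of the first 1D entropy variable `V₁ = (Γ-S)/(Γ-1) + ρ/p`: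
`[[V₁]] = [[z₁]]/⟨z₁⟩_ln + (1/(Γ-1))[[z₂]]/⟨z₂⟩_ln + [[z₂]]` with
`z₁ = ρ`, `z₂ = ρ/p`. -/
theorem jump_V1 (Γ ρL uL pL ρR uR pR : ℝ)
    (hΓ : 1 < Γ) (hΓ2 : Γ ≤ 2)
    (hρL : 0 < ρL) (hρR : 0 < ρR) (hpL : 0 < pL) (hpR : 0 < pR)
    (huL : |uL| < 1) (huR : |uR| < 1)
    (h1 : ρL ≠ ρR) (h2 : ρL / pL ≠ ρR / pR) :
    ((Γ - (Real.log pR - Γ * Real.log ρR)) / (Γ - 1) + ρR / pR)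
      - ((Γ - (Real.log pL - Γ * Real.log ρL)) / (Γ - 1) + ρL / pL)
    = (ρR - ρL) / logMean ρL ρR
      + (1 / (Γ - 1)) * ((ρR / pR - ρL / pL) / logMean (ρL / pL) (ρR / pR))
      + (ρR / pR - ρL / pL) := by
  rw [jump_div_logMean _ _ hρL hρR h1,
      jump_div_logMean _ _ (div_pos hρL hpL) (div_pos hρR hpR) h2,
      Real.log_div (ne_of_gt hρL) (ne_of_gt hpL),
      Real.log_div (ne_of_gt hρR) (ne_of_gt hpR)]
  have hΓ1 : Γ - 1 ≠ 0 := by linarith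
  field_simp
  ring
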